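/- Let (g, t) be a construction with split ((g′, t), ics). Writing CTS(g′, t) = [tr1,…,trn] and ics = [ic(tr1),…,ic(trn)], it holds that the foundation token-sequence satisfies Ft(g, t) = Ft(ic(tr1)) ⊕ ⋯ ⊕ Ft(ic(trn)). -/

import Mathlib

namespace RST

/-! ## Type systems -/

/-- A relation (given as a set of pairs) is a partial order on the set `Ty`. -/
def IsPartialOrderOn {U : Type*} (Ty : Set U) (le : Set (U × U)) : Prop :=
  (∀ p ∈ le, p.1 ∈ Ty ∧ p.2 ∈ Ty) ∧
  (∀ τ ∈ Ty, (τ, τ) ∈ le) ∧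
  (∀ a b : U, (a, b) ∈ le → (b, a) ∈ le → a = b) ∧
  (∀ a b c : U, (a, b) ∈ le → (b, c) ∈ le → (a, c) ∈ le)

/-- The subtype closure of `Ty'` in the type system `(Ty, le)`. -/
def subtypeClosure {U : Type*} (Ty : Set U) (le : Set (U × U)) (Ty' : Set U) : Set U :=
  {τ | τ ∈ Ty ∧ ∃ τ' ∈ Ty', (τ, τ') ∈ le}

/-- The set of all subtype closures of subsets of `Ty`. -/
def SC {U : Type*} (Ty : Set U) (le : Set (U × U)) : Set (Set U) :=
  {S | ∃ Ty' ⊆ Ty, S = subtypeClosure Ty le Ty'}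

/-- The candidate order of an upper bound extension: the reflexive closure (on `Ty ∪ Tystar`)
of `le` together with the pairs `(τ, f S)` for `τ ∈ S ∈ SC Ty le`. -/
def upperBoundRel {U : Type*} (Ty Tystar : Set U) (le : Set (U × U)) (f : Set U → U) :
    Set (U × U) :=
  (le ∪ {p : U × U | ∃ S ∈ SC Ty le, p.1 ∈ S ∧ p.2 = f S}) ∪
    {p : U × U | p.1 = p.2 ∧ p.1 ∈ Ty ∪ Tystar}

/-! ## Graphs -/

/-- A (raw) directed labelled bipartite graph: tokens `Tk`, configurators `Cf`, arrows `Arr`,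
incidence, arrow indices and vertex labels all given relationally (as sets of pairs), so that
unions of graphs are componentwise unions. -/
structure PreGraph (V A L : Type*) where
  Tk : Set V
  Cf : Set V
  Arr : Set A
  inc : Set (A × (V × V))
  ia : Set (A × ℕ)
  tl : Set (V × L)
  cl : Set (V × L)

variable {V A L : Type*}

instance : Union (PreGraph V A L) :=
  ⟨fun g h =>
    ⟨g.Tk ∪ h.Tk, g.Cf ∪ h.Cf, g.Arr ∪ h.Arr, g.inc ∪ h.inc, g.ia ∪ h.ia,
      g.tl ∪ h.tl, g.cl ∪ h.cl⟩⟩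

def PreGraph.Subgraph (h g : PreGraph V A L) : Prop :=
  h.Tk ⊆ g.Tk ∧ h.Cf ⊆ g.Cf ∧ h.Arr ⊆ g.Arr ∧ h.inc ⊆ g.inc ∧ h.ia ⊆ g.ia ∧
    h.tl ⊆ g.tl ∧ h.cl ⊆ g.cl

/-- The vertices adjacent to `u` (together with `u`). -/
def PreGraph.adjTo (g : PreGraph V A L) (u : V) : Set V :=
  {u} ∪ {v | ∃ a ∈ g.Arr, (a, (v, u)) ∈ g.inc ∨ (a, (u, v)) ∈ g.inc}

/-- The arrows incident to `u`. -/
def PreGraph.incidentArrows (g : PreGraph V A L) (u : V) : Set A :=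
  {a | a ∈ g.Arr ∧ ∃ v, (a, (v, u)) ∈ g.inc ∨ (a, (u, v)) ∈ g.inc}

/-- The restriction of a graph to given vertex and arrow sets. -/
def PreGraph.restrict (g : PreGraph V A L) (Vs : Set V) (As : Set A) : PreGraph V A L :=
  ⟨g.Tk ∩ Vs, g.Cf ∩ Vs, g.Arr ∩ As, {q | q ∈ g.inc ∧ q.1 ∈ As},
    {q | q ∈ g.ia ∧ q.1 ∈ As}, {q | q ∈ g.tl ∧ q.1 ∈ Vs}, {q | q ∈ g.cl ∧ q.1 ∈ Vs}⟩

/-- The neighbourhood of a vertex `u`. -/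
def PreGraph.Nh (g : PreGraph V A L) (u : V) : PreGraph V A L :=
  g.restrict (g.adjTo u) (g.incidentArrows u)

/-- A set of pairs is (the graph of) a function with domain `D`. -/
def IsFunctionOn {α β : Type*} (R : Set (α × β)) (D : Set α) : Prop :=
  (∀ p ∈ R, p.1 ∈ D) ∧ ∀ x ∈ D, ∃! y, (x, y) ∈ R

/-- A raw graph is a genuine directed labelled bipartite graph. -/
def IsGraph (g : PreGraph V A L) : Prop :=
  Disjoint g.Tk g.Cf ∧
  IsFunctionOn g.inc g.Arr ∧
  (∀ a v w, (a, (v, w)) ∈ g.inc → (v ∈ g.Tk ∧ w ∈ g.Cf) ∨ (v ∈ g.Cf ∧ w ∈ g.Tk)) ∧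
  IsFunctionOn g.ia g.Arr ∧ IsFunctionOn g.tl g.Tk ∧ IsFunctionOn g.cl g.Cf

/-- `ars` is the list of incoming arrows of `u`, listed in increasing index order
(the arrow at position `i` carries index `i+1`). -/
def InArrowSeq (g : PreGraph V A L) (u : V) (ars : List A) : Prop :=
  ars.Nodup ∧ (∀ a : A, a ∈ ars ↔ a ∈ g.Arr ∧ ∃ w, (a, (w, u)) ∈ g.inc) ∧
  ∀ (i : ℕ) (a : A), ars[i]? = some a → (a, i + 1) ∈ g.ia

/-- `t` is an output token of the configurator `u`. -/
def OutputTok (g : PreGraph V A L) (u t : V) : Prop :=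
  ∃ a ∈ g.Arr, (a, (u, t)) ∈ g.inc

/-- `ts` is the input token-sequence of the configurator `u`. -/
def InputTokSeq (g : PreGraph V A L) (u : V) (ts : List V) : Prop :=
  ∃ ars : List A, InArrowSeq g u ars ∧
    List.Forall₂ (fun a v => (a, (v, u)) ∈ g.inc) ars ts

/-- `τs` is the input type-sequence of the configurator `u`. -/
def InputTypeSeq (g : PreGraph V A L) (u : V) (τs : List L) : Prop :=
  ∃ ts : List V, InputTokSeq g u ts ∧ List.Forall₂ (fun v τ => (v, τ) ∈ g.tl) ts τs

/-- `g` is a configuration of the constructor `c` (with signature `(ins, out)`),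
whose single configurator is `u`. -/
def IsConfiguration (le : Set (L × L)) (g : PreGraph V A L) (u : V) (c : L)
    (ins : List L) (out : L) : Prop :=
  IsGraph g ∧ g.Cf = {u} ∧ (u, c) ∈ g.cl ∧
  g.Tk = {v | ∃ a ∈ g.Arr, (a, (v, u)) ∈ g.inc ∨ (a, (u, v)) ∈ g.inc} ∧
  (∃! a0 : A, a0 ∈ g.Arr ∧ ∃ w, (a0, (u, w)) ∈ g.inc) ∧
  (∀ a0 ∈ g.Arr, ∀ w : V, (a0, (u, w)) ∈ g.inc →
      (a0, 0) ∈ g.ia ∧ ∃ σ, (w, σ) ∈ g.tl ∧ (σ, out) ∈ le) ∧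
  (∃ ars : List A, InArrowSeq g u ars ∧ ars.length = ins.length ∧
    ∀ (i : ℕ) (a : A) (τ : L), ars[i]? = some a → ins[i]? = some τ →
      ∃ w σ, (a, (w, u)) ∈ g.inc ∧ (w, σ) ∈ g.tl ∧ (σ, τ) ∈ le)

/-- A structure graph for the constructor specification `(C, sig)` over types `(Ty, le)`. -/
def IsStructureGraph (Ty : Set L) (le : Set (L × L)) (C : Set L)
    (sig : Set (L × (List L × L))) (g : PreGraph V A L) : Prop :=
  IsGraph g ∧ (∀ x τ, (x, τ) ∈ g.tl → τ ∈ Ty) ∧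
  ∀ u ∈ g.Cf, ∃ c ins out, (u, c) ∈ g.cl ∧ c ∈ C ∧ (c, (ins, out)) ∈ sig ∧
    IsConfiguration le (g.Nh u) u c ins out

/-! ## Construction spaces -/

/-- The raw data of a construction space: a type system, a constructor specification and
a structure graph. -/
structure CSpace (V A L : Type*) where
  Ty : Set L
  le : Set (L × L)
  C : Set L
  sig : Set (L × (List L × L))
  G : PreGraph V A L

instance : Union (CSpace V A L) :=
  ⟨fun c d => ⟨c.Ty ∪ d.Ty, c.le ∪ d.le, c.C ∪ d.C, c.sig ∪ d.sig, c.G ∪ d.G⟩⟩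

/-- The raw data forms a genuine construction space. -/
def IsCSpace (Cs : CSpace V A L) : Prop :=
  IsPartialOrderOn Cs.Ty Cs.le ∧ Disjoint Cs.C Cs.Ty ∧ IsFunctionOn Cs.sig Cs.C ∧
  (∀ c ins out, (c, (ins, out)) ∈ Cs.sig →
      ins ≠ [] ∧ (∀ τ ∈ ins, τ ∈ Cs.Ty) ∧ out ∈ Cs.Ty) ∧
  IsStructureGraph Cs.Ty Cs.le Cs.C Cs.sig Cs.G

/-- Token-functionality of the constructors of a structure graph. -/
def TokenFunctional (g : PreGraph V A L) : Prop :=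
  ∀ u u' c, u ∈ g.Cf → u' ∈ g.Cf → (u, c) ∈ g.cl → (u', c) ∈ g.cl →
    ∀ ts, InputTokSeq g u ts → InputTokSeq g u' ts →
      ∀ t t', OutputTok g u t → OutputTok g u' t' → t = t'

/-- Type-functionality of the constructors of a structure graph. -/
def TypeFunctional (g : PreGraph V A L) : Prop :=
  ∀ u u' c, u ∈ g.Cf → u' ∈ g.Cf → (u, c) ∈ g.cl → (u', c) ∈ g.cl →
    ∀ τs, InputTypeSeq g u τs → InputTypeSeq g u' τs →
      ∀ t t' τ τ', OutputTok g u t → OutputTok g u' t' →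
        (t, τ) ∈ g.tl → (t', τ') ∈ g.tl → τ = τ'

def IsFunctionalGraph (g : PreGraph V A L) : Prop :=
  TokenFunctional g ∧ TypeFunctional g

/-! ## Representational systems -/

/-- The raw data of a representational system: grammatical, entailment and identification
spaces. -/
structure RSystem (V A L : Type*) where
  Gs : CSpace V A L
  Es : CSpace V A L
  Is : CSpace V A L

instance : Union (RSystem V A L) :=
  ⟨fun r s => ⟨r.Gs ∪ s.Gs, r.Es ∪ s.Es, r.Is ∪ s.Is⟩⟩

/-- The universal space of a representational system. -/
def RSystem.uspace (R : RSystem V A L) : CSpace V A L := (R.Gs ∪ R.Es) ∪ R.Is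

/-- `R` is a representational system formed over the type system `(Ty, le)` and the
meta-type system `(MTy, Mle)`. -/
def IsRSystem (R : RSystem V A L) (Ty : Set L) (le : Set (L × L))
    (MTy : Set L) (Mle : Set (L × L)) : Prop :=
  IsPartialOrderOn Ty le ∧ IsPartialOrderOn MTy Mle ∧
  IsPartialOrderOn (Ty ∪ MTy) (le ∪ Mle) ∧
  R.Gs.Ty = Ty ∧ R.Gs.le = le ∧ IsCSpace R.Gs ∧ IsFunctionalGraph R.Gs.G ∧
  R.Es.Ty = Ty ∧ R.Es.le = le ∧ IsCSpace R.Es ∧ R.Es.G.Tk ⊆ R.Gs.G.Tk ∧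
  R.Is.Ty = Ty ∪ MTy ∧ R.Is.le = le ∪ Mle ∧ IsCSpace R.Is ∧
  (∀ x ∈ R.Is.G.Tk, x ∉ R.Gs.G.Tk → ∃ τ ∈ MTy, (x, τ) ∈ R.Is.G.tl) ∧
  (∀ x ∈ R.Is.G.Tk, (∃ u ∈ R.Is.G.Cf, OutputTok R.Is.G u x) → x ∉ R.Gs.G.Tk) ∧
  IsCSpace (R.Gs ∪ R.Es) ∧ IsCSpace (R.Gs ∪ R.Is) ∧ IsCSpace (R.Es ∪ R.Is) ∧
  Disjoint R.Gs.C R.Es.C ∧ Disjoint R.Gs.C R.Is.C ∧ Disjoint R.Es.C R.Is.C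

/-- `(R, R', Is'')` is an inter-representational-system encoding, where `R` is formed over
`(Ty, le)` and `(MTy, Mle)`, `R'` over `(Ty', le')` and `(MTy', Mle')`, and `Is''` is an
identification space formed over `(Ty ∪ Ty', le ∪ le')` and `(MTy'', Mle'')`. -/
def IsIRSE (R R' : RSystem V A L) (Is'' : CSpace V A L)
    (Ty : Set L) (le : Set (L × L)) (MTy : Set L) (Mle : Set (L × L))
    (Ty' : Set L) (le' : Set (L × L)) (MTy' : Set L) (Mle' : Set (L × L))
    (MTy'' : Set L) (Mle'' : Set (L × L)) : Prop :=
  IsRSystem R Ty le MTy Mle ∧ IsRSystem R' Ty' le' MTy' Mle' ∧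
  IsRSystem (R ∪ R') (Ty ∪ Ty') (le ∪ le') (MTy ∪ MTy') (Mle ∪ Mle') ∧
  IsPartialOrderOn MTy'' Mle'' ∧
  IsPartialOrderOn ((Ty ∪ Ty') ∪ MTy'') ((le ∪ le') ∪ Mle'') ∧
  Is''.Ty = (Ty ∪ Ty') ∪ MTy'' ∧ Is''.le = (le ∪ le') ∪ Mle'' ∧ IsCSpace Is'' ∧
  MTy ∪ MTy' ⊆ MTy'' ∧ Mle ∪ Mle' ⊆ Mle'' ∧
  (∀ x ∈ Is''.G.Tk, x ∉ (R.Gs ∪ R'.Gs).G.Tk → ∃ τ ∈ MTy'', (x, τ) ∈ Is''.G.tl) ∧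
  (∀ x ∈ Is''.G.Tk, (∃ u ∈ Is''.G.Cf, OutputTok Is''.G u x) →
      x ∉ (R.Gs ∪ R'.Gs).G.Tk) ∧
  IsCSpace ((R.Gs ∪ R'.Gs) ∪ Is'') ∧ IsCSpace ((R.Es ∪ R'.Es) ∪ Is'') ∧
  IsCSpace ((R.Is ∪ R'.Is) ∪ Is'') ∧
  Disjoint Is''.C (R.Gs ∪ R'.Gs).C ∧ Disjoint Is''.C (R.Es ∪ R'.Es).C ∧
  Disjoint Is''.C (R.Is ∪ R'.Is).C

/-! ## Trails -/

/-- A trail candidate: a list of arrows together with an associated source and target vertex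
(needed for the empty trail `[]_v`). -/
structure Trail (V A : Type*) where
  arrows : List A
  src : V
  tgt : V

/-- The empty trail `[]_v`. -/
def Trail.nil {V A : Type*} (v : V) : Trail V A := ⟨[], v, v⟩

/-- Concatenation `e ⊕ w` of trails. -/
def Trail.append {V A : Type*} (e w : Trail V A) : Trail V A :=
  ⟨e.arrows ++ w.arrows, e.src, w.tgt⟩

/-- The image of a trail under vertex/arrow maps. -/
def Trail.map {V A : Type*} (fv : V → V) (fa : A → A) (tr : Trail V A) : Trail V A :=
  ⟨tr.arrows.map fa, fv tr.src, fv tr.tgt⟩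

/-- The arrows chain through the graph from `s` to `t`. -/
def ChainIn (g : PreGraph V A L) : List A → V → V → Prop
  | [], s, t => s = t
  | a :: rest, s, t => a ∈ g.Arr ∧ ∃ m, (a, (s, m)) ∈ g.inc ∧ ChainIn g rest m t

/-- `tr` is a trail in `g`. -/
def IsTrailIn (g : PreGraph V A L) (tr : Trail V A) : Prop :=
  tr.arrows.Nodup ∧ ChainIn g tr.arrows tr.src tr.tgt ∧
  tr.src ∈ g.Tk ∪ g.Cf ∧ tr.tgt ∈ g.Tk ∪ g.Cf

/-- A trail is well-formed provided its source and target are tokens. -/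
def WellFormed (g : PreGraph V A L) (tr : Trail V A) : Prop :=
  tr.src ∈ g.Tk ∧ tr.tgt ∈ g.Tk

/-- `tr` is (source-)extendable by the arrow `a`. -/
def ExtendableBy (g : PreGraph V A L) (tr : Trail V A) (a : A) : Prop :=
  a ∈ g.Arr ∧ a ∉ tr.arrows ∧ ∃ s, (a, (s, tr.src)) ∈ g.inc

def Extendable (g : PreGraph V A L) (tr : Trail V A) : Prop :=
  ∃ a, ExtendableBy g tr a

def NonExtendable (g : PreGraph V A L) (tr : Trail V A) : Prop :=
  ¬ Extendable g tr

/-- `TES g tr S` holds iff `S` is the trail extension sequence of the trail `tr` in `g`,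
following the recursive definition of TES. -/
inductive TES (g : PreGraph V A L) : Trail V A → List (Trail V A) → Prop where
  | nonext (tr : Trail V A) (h : NonExtendable g tr) :
      TES g tr [⟨[], tr.src, tr.src⟩]
  | ext (tr : Trail V A) (a : A) (u : V) (ars : List A)
      (Ss : List (List (Trail V A)))
      (hext : ExtendableBy g tr a)
      (hinc : (a, (u, tr.src)) ∈ g.inc)
      (hars : InArrowSeq g u ars)
      (hlen : Ss.length = ars.length)
      (hrec : ∀ (i : ℕ) (ai : A) (si : V) (Si : List (Trail V A)),
          ars[i]? = some ai → Ss[i]? = some Si → (ai, (si, u)) ∈ g.inc →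
          TES g ⟨ai :: a :: tr.arrows, si, tr.tgt⟩ Si) :
      TES g tr (List.flatten (List.zipWith
        (fun (ai : A) (Si : List (Trail V A)) =>
          Si.map (fun e => (⟨e.arrows ++ [ai, a], e.src, tr.src⟩ : Trail V A)))
        ars Ss))

/-- The sequence of sources of a sequence of trails. -/
def srcSeq {V A : Type*} (S : List (Trail V A)) : List V := S.map Trail.src

/-- The right product `S ◁ w`, appending the trail `w` to each trail in `S`. -/
def rprod {V A : Type*} (S : List (Trail V A)) (w : Trail V A) : List (Trail V A) :=
  S.map fun e => e.append w

/-! ## Constructions -/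

/-- Every token is the target of at most one arrow. -/
def UniStructured (g : PreGraph V A L) : Prop :=
  ∀ x ∈ g.Tk, ∀ a ∈ g.Arr, ∀ b ∈ g.Arr,
    (∃ w, (a, (w, x)) ∈ g.inc) → (∃ w, (b, (w, x)) ∈ g.inc) → a = b

/-- `(g, t)` is a construction in the construction space `Cs`: `g` is a finite uni-structured
structure graph (a subgraph of the structure graph of `Cs`), `t` is a token of `g`, and every
vertex of `g` is the source of a trail targeting `t`. -/
def IsConstruction (Cs : CSpace V A L) (g : PreGraph V A L) (t : V) : Prop :=
  g.Subgraph Cs.G ∧ IsStructureGraph Cs.Ty Cs.le Cs.C Cs.sig g ∧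
  g.Tk.Finite ∧ g.Cf.Finite ∧ g.Arr.Finite ∧ UniStructured g ∧ t ∈ g.Tk ∧
  ∀ v ∈ g.Tk ∪ g.Cf, ∃ tr : Trail V A, IsTrailIn g tr ∧ tr.src = v ∧ tr.tgt = t

/-- `(g, t)` is a construction *in* `Cs` in the strong sense: moreover every configurator of `g`
has its full neighbourhood from the structure graph of `Cs`. -/
def IsConstructionIn (Cs : CSpace V A L) (g : PreGraph V A L) (t : V) : Prop :=
  IsConstruction Cs g t ∧ ∀ u ∈ g.Cf, g.Nh u = Cs.G.Nh u

/-- A trivial construction: the construct is its only vertex. -/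
def TrivialC (g : PreGraph V A L) (t : V) : Prop := g.Tk ∪ g.Cf = {t}

/-- A basic construction: exactly one configurator. -/
def BasicC (g : PreGraph V A L) : Prop := ∃ u, g.Cf = {u}

/-- The set of arrows occurring in a sequence of trails. -/
def trailArrowSet {V A : Type*} (TR : List (Trail V A)) : Set A :=
  {a | ∃ tr ∈ TR, a ∈ tr.arrows}

/-- The vertices of the `TR`-graph: vertices incident to arrows of trails of `TR`,
together with the associated vertex of any empty trail of `TR`. -/
def trailVertexSet (g : PreGraph V A L) (TR : List (Trail V A)) : Set V :=
  {v | (∃ a ∈ trailArrowSet TR, ∃ w, (a, (v, w)) ∈ g.inc ∨ (a, (w, v)) ∈ g.inc) ∨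
    ∃ tr ∈ TR, tr.arrows = [] ∧ tr.src = v}

/-- The `TR`-graph `v(TR)`. -/
def trGraph (g : PreGraph V A L) (TR : List (Trail V A)) : PreGraph V A L :=
  g.restrict (trailVertexSet g TR) (trailArrowSet TR)

/-- `((g', t), ics)` is a split of the construction `(g, t)`: `(g', t)` is a generator and
`ics` is the corresponding induced construction sequence (each induced construction is
`(v(TES(tri)), source(tri))`, the TES being computed in `(g, t)`). -/
def IsSplit (Cs : CSpace V A L) (g : PreGraph V A L) (t : V)
    (g' : PreGraph V A L) (ics : List (PreGraph V A L × V)) : Prop :=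
  IsConstruction Cs g' t ∧ g'.Subgraph g ∧
  ∃ trs : List (Trail V A), TES g' (Trail.nil t) trs ∧ ics.length = trs.length ∧
    ∀ (i : ℕ) (tri : Trail V A), trs[i]? = some tri →
      ∃ Si : List (Trail V A), TES g tri Si ∧ ics[i]? = some (trGraph g Si, tri.src)

/-! ## Decompositions -/

/-- A decomposition tree: vertices labelled by a graph and a token, with the incoming arrows
of every vertex given in index order by a list of subtrees. -/
inductive DTree (V A L : Type*) where
  | node : PreGraph V A L → V → List (DTree V A L) → DTree V A L

def DTree.rootGraph : DTree V A L → PreGraph V A L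
  | .node g _ _ => g

def DTree.rootTok : DTree V A L → V
  | .node _ t _ => t

def DTree.kids : DTree V A L → List (DTree V A L)
  | .node _ _ cs => cs

/-- `IsDecompositionOf Cs D g t` holds iff `D` is a decomposition of the construction
`(g, t)` in `Cs`. -/
inductive IsDecompositionOf (Cs : CSpace V A L) : DTree V A L → PreGraph V A L → V → Prop where
  | single (g : PreGraph V A L) (t : V) (h : IsConstruction Cs g t) :
      IsDecompositionOf Cs (.node g t []) g t
  | split (g : PreGraph V A L) (t : V) (g' : PreGraph V A L)
      (ics : List (PreGraph V A L × V)) (cs : List (DTree V A L))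
      (hc : IsConstruction Cs g t)
      (hsplit : IsSplit Cs g t g' ics)
      (hlen : cs.length = ics.length)
      (hrec : ∀ (i : ℕ) (ci : DTree V A L) (gi : PreGraph V A L) (ti : V),
          cs[i]? = some ci → ics[i]? = some (gi, ti) → IsDecompositionOf Cs ci gi ti) :
      IsDecompositionOf Cs (.node g' t cs) g t

/-- `LcsRel D ls` holds iff `ls` is the leaf construction-sequence of `D`. -/
inductive LcsRel : DTree V A L → List (PreGraph V A L × V) → Prop where
  | leaf (g : PreGraph V A L) (t : V) : LcsRel (.node g t []) [(g, t)]
  | node (g : PreGraph V A L) (t : V) (cs : List (DTree V A L))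
      (ls : List (List (PreGraph V A L × V)))
      (hne : cs ≠ []) (hlen : ls.length = cs.length)
      (h : ∀ (i : ℕ) (ci : DTree V A L) (li : List (PreGraph V A L × V)),
          cs[i]? = some ci → ls[i]? = some li → LcsRel ci li) :
      LcsRel (.node g t cs) ls.flatten

/-- `(p, w)` is one of the constructions labelling a vertex of the decomposition tree. -/
inductive LabelOf : DTree V A L → PreGraph V A L → V → Prop where
  | root (g : PreGraph V A L) (t : V) (cs : List (DTree V A L)) :
      LabelOf (.node g t cs) g t
  | child (g : PreGraph V A L) (t : V) (cs : List (DTree V A L))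
      (c : DTree V A L) (p : PreGraph V A L) (w : V) :
      c ∈ cs → LabelOf c p w → LabelOf (.node g t cs) p w

/-- The union of all the graphs labelling vertices of the decomposition tree
(the graph of the construction `ct(D)` of the decomposition `D`). -/
def DTree.ctGraph (D : DTree V A L) : PreGraph V A L :=
  ⟨{x | ∃ p w, LabelOf D p w ∧ x ∈ p.Tk},
   {x | ∃ p w, LabelOf D p w ∧ x ∈ p.Cf},
   {a | ∃ p w, LabelOf D p w ∧ a ∈ p.Arr},
   {q | ∃ p w, LabelOf D p w ∧ q ∈ p.inc},
   {q | ∃ p w, LabelOf D p w ∧ q ∈ p.ia},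
   {q | ∃ p w, LabelOf D p w ∧ q ∈ p.tl},
   {q | ∃ p w, LabelOf D p w ∧ q ∈ p.cl}⟩

/-- Every vertex label of the decomposition tree satisfies `P`. -/
inductive AllLabels (P : PreGraph V A L → V → Prop) : DTree V A L → Prop where
  | node (g : PreGraph V A L) (t : V) (cs : List (DTree V A L)) :
      P g t → (∀ c, c ∈ cs → AllLabels P c) → AllLabels P (.node g t cs)

/-- The subtree of a decomposition tree at a given position (a path of child indices). -/
def subtreeAt : List ℕ → DTree V A L → Option (DTree V A L)
  | [], D => some D
  | i :: rest, .node _ _ cs =>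
    match cs[i]? with
    | some c => subtreeAt rest c
    | none => none

/-! ## Patterns and embeddings -/

/-- An embedding of the graph `g` into the graph `p`: an isomorphism preserving arrow indices
and configurator labels, with token labels respecting the subtype relation `le`. -/
def IsEmbedding (le : Set (L × L)) (g p : PreGraph V A L) (fv : V → V) (fa : A → A) : Prop :=
  (∀ x ∈ g.Tk, fv x ∈ p.Tk) ∧ (∀ x ∈ g.Cf, fv x ∈ p.Cf) ∧
  (∀ x ∈ g.Tk ∪ g.Cf, ∀ y ∈ g.Tk ∪ g.Cf, fv x = fv y → x = y) ∧
  (∀ y ∈ p.Tk, ∃ x ∈ g.Tk, fv x = y) ∧ (∀ y ∈ p.Cf, ∃ x ∈ g.Cf, fv x = y) ∧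
  (∀ a ∈ g.Arr, fa a ∈ p.Arr) ∧
  (∀ a ∈ g.Arr, ∀ b ∈ g.Arr, fa a = fa b → a = b) ∧
  (∀ b ∈ p.Arr, ∃ a ∈ g.Arr, fa a = b) ∧
  (∀ a v w, (a, (v, w)) ∈ g.inc → (fa a, (fv v, fv w)) ∈ p.inc) ∧
  (∀ a n, (a, n) ∈ g.ia → (fa a, n) ∈ p.ia) ∧
  (∀ u c, (u, c) ∈ g.cl → (fv u, c) ∈ p.cl) ∧
  (∀ x τ, (x, τ) ∈ g.tl → ∃ σ, (fv x, σ) ∈ p.tl ∧ (τ, σ) ∈ le)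

/-- The construction `(g, t)` matches the pattern `(p, v)`. -/
def MatchesPattern (le : Set (L × L)) (g : PreGraph V A L) (t : V)
    (p : PreGraph V A L) (v : V) : Prop :=
  ∃ fv fa, IsEmbedding le g p fv fa ∧ fv t = v

/-- `Ps` is a pattern space for `Cs`: a construction space over the same type system and
constructor specification such that every construction of `Cs` matches some construction
of `Ps`. -/
def IsPatternSpace (Cs Ps : CSpace V A L) : Prop :=
  Ps.Ty = Cs.Ty ∧ Ps.le = Cs.le ∧ Ps.C = Cs.C ∧ Ps.sig = Cs.sig ∧ IsCSpace Ps ∧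
  ∀ g t, IsConstruction Cs g t →
    ∃ p v, IsConstruction Ps p v ∧ MatchesPattern Cs.le g t p v

/-- Vertex-wise matching of two same-shape decomposition trees under a common pair of maps. -/
inductive DMatches (le : Set (L × L)) (fv : V → V) (fa : A → A) :
    DTree V A L → DTree V A L → Prop where
  | node (g : PreGraph V A L) (t : V) (p : PreGraph V A L) (v : V)
      (cs ds : List (DTree V A L))
      (hemb : IsEmbedding le g p fv fa) (ht : fv t = v)
      (hlen : cs.length = ds.length)
      (hrec : ∀ (i : ℕ) (ci di : DTree V A L), cs[i]? = some ci → ds[i]? = some di →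
          DMatches le fv fa ci di) :
      DMatches le fv fa (.node g t cs) (.node p v ds)

/-- The decomposition `D` matches the (pattern) decomposition `Δ`: there is an arrow-index
preserving isomorphism of trees together with an embedding of `ct(D)` into `ct(Δ)` whose
restriction to each vertex label is an embedding into the corresponding pattern label. -/
def DecompositionMatches (le : Set (L × L)) (D Δ : DTree V A L) : Prop :=
  ∃ fv fa, IsEmbedding le D.ctGraph Δ.ctGraph fv fa ∧ fv D.rootTok = Δ.rootTok ∧
    DMatches le fv fa D Δ

/-! ## Descriptions -/

/-- A description: a set of decompositions of patterns (constructions in the pattern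
space `Ps`). -/
def IsDescriptionOf (Ps : CSpace V A L) (Ds : Set (DTree V A L)) : Prop :=
  ∀ Δ ∈ Ds, ∃ p v, IsConstruction Ps p v ∧ IsDecompositionOf Ps Δ p v

/-- The description `Ds` is complete for `Cs`. -/
def CompleteDescription (Cs : CSpace V A L) (Ds : Set (DTree V A L)) : Prop :=
  ∀ g t, IsConstruction Cs g t →
    ∃ Δ ∈ Ds, ∃ D, IsDecompositionOf Cs D g t ∧ DecompositionMatches Cs.le D Δ

/-- The set of patterns labelling vertices of decompositions in `Ds`. -/
def PatternsOf (Ds : Set (DTree V A L)) : Set (PreGraph V A L × V) :=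
  {pv | ∃ Δ ∈ Ds, LabelOf Δ pv.1 pv.2}

/-- Label-preserving isomorphism of patterns/constructions. -/
def LabelIsomorphic (g : PreGraph V A L) (t : V) (p : PreGraph V A L) (v : V) : Prop :=
  ∃ fv fa, IsEmbedding {q : L × L | q.1 = q.2} g p fv fa ∧ fv t = v

/-- The description `Ds` is compact: finitely many patterns up to label-preserving
isomorphism. -/
def CompactDescription (Ds : Set (DTree V A L)) : Prop :=
  ∃ Reps : Set (PreGraph V A L × V), Reps.Finite ∧
    ∀ pv ∈ PatternsOf Ds, ∃ qw ∈ Reps, LabelIsomorphic pv.1 pv.2 qw.1 qw.2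

/-! ## Transformation constraints and structural transformations -/

/-- A transformation-constraint-shaped triple: two patterns (or constructions) together with
a set of patterns (or constructions). -/
structure TConstraint (V A L : Type*) where
  pa : PreGraph V A L
  ca : V
  pb : PreGraph V A L
  cb : V
  Pc : Set (PreGraph V A L × V)

/-- The union of the graphs of a set of patterns. -/
def pGraph (P : Set (PreGraph V A L × V)) : PreGraph V A L :=
  ⟨{x | ∃ pv ∈ P, x ∈ pv.1.Tk}, {x | ∃ pv ∈ P, x ∈ pv.1.Cf},
   {a | ∃ pv ∈ P, a ∈ pv.1.Arr}, {q | ∃ pv ∈ P, q ∈ pv.1.inc},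
   {q | ∃ pv ∈ P, q ∈ pv.1.ia}, {q | ∃ pv ∈ P, q ∈ pv.1.tl},
   {q | ∃ pv ∈ P, q ∈ pv.1.cl}⟩

/-- A respectful embedding of the set of patterns `P` into the set of patterns `P'`. -/
def RespectfulEmbedding (le : Set (L × L)) (P P' : Set (PreGraph V A L × V))
    (fv : V → V) (fa : A → A) : Prop :=
  IsEmbedding le (pGraph P) (pGraph P') fv fa ∧
  ∀ pv ∈ P, ∃ qw ∈ P', IsEmbedding le pv.1 qw.1 fv fa ∧ fv pv.2 = qw.2

/-- Satisfaction of one transformation-constraint-shaped triple by another: embeddings of the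
first two components, a respectful embedding of the third, whose common underlying maps give
an isomorphism of the unions of the graphs. -/
def TCSatisfies (le : Set (L × L)) (s s' : TConstraint V A L) : Prop :=
  ∃ fv fa,
    IsEmbedding le s.pa s'.pa fv fa ∧ fv s.ca = s'.ca ∧
    IsEmbedding le s.pb s'.pb fv fa ∧ fv s.cb = s'.cb ∧
    RespectfulEmbedding le s.Pc s'.Pc fv fa ∧
    IsEmbedding le ((s.pa ∪ s.pb) ∪ pGraph s.Pc) ((s'.pa ∪ s'.pb) ∪ pGraph s'.Pc) fv fa

/-- A transformation constraint for an encoding described by `(Ds, Ds', P'')`. -/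
def IsTransformationConstraint (Ds Ds' : Set (DTree V A L))
    (P'' : Set (PreGraph V A L × V)) (s : TConstraint V A L) : Prop :=
  (s.pa, s.ca) ∈ PatternsOf Ds ∧ (s.pb, s.cb) ∈ PatternsOf Ds' ∧ s.Pc ⊆ P''

/-- A constraint assignment for `Δ` and `Δ'`: a partial function (modelled with `Option`) on
pairs of vertices (paths) whose values are transformation constraints from `S0` matched by the
corresponding labels. -/
def IsConstraintAssignment (leR leR' : Set (L × L)) (S0 : Set (TConstraint V A L))
    (Δ Δ' : DTree V A L) (Lm : List ℕ → List ℕ → Option (TConstraint V A L)) : Prop :=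
  ∀ pi pi' s, Lm pi pi' = some s → s ∈ S0 ∧
    (∃ δ, subtreeAt pi Δ = some δ ∧
        MatchesPattern leR δ.rootGraph δ.rootTok s.pa s.ca) ∧
    (∃ δ', subtreeAt pi' Δ' = some δ' ∧
        MatchesPattern leR' δ'.rootGraph δ'.rootTok s.pb s.cb)

/-- The constraint assignment `Lm` is satisfied by the pair of decompositions `(D, D')`
(whose vertices correspond, via the shape-preserving matchings, to those of `Δ`, `Δ'`). -/
def LSatisfiedBy (leI : Set (L × L)) (Ip : CSpace V A L)
    (Lm : List ℕ → List ℕ → Option (TConstraint V A L)) (D D' : DTree V A L) : Prop :=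
  ∀ pi pi' s d d', Lm pi pi' = some s →
    subtreeAt pi D = some d → subtreeAt pi' D' = some d' →
    ∃ Cset : Set (PreGraph V A L × V),
      (∀ pv ∈ Cset, IsConstruction Ip pv.1 pv.2) ∧
      TCSatisfies leI ⟨d.rootGraph, d.rootTok, d'.rootGraph, d'.rootTok, Cset⟩ s

/-- `(g', t')` is a structural `L`-transformation of `(g, t)` (with respect to the pattern
decompositions `Δ`, `Δ'` for the universal spaces `Ru`, `Ru'` and the inter-property
identification space `Ip`). -/
def IsStructuralLTransformation (Ru Ru' Ip : CSpace V A L) (Δ Δ' : DTree V A L)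
    (Lm : List ℕ → List ℕ → Option (TConstraint V A L))
    (g : PreGraph V A L) (t : V) (g' : PreGraph V A L) (t' : V) : Prop :=
  (∃ D, IsDecompositionOf Ru D g t ∧ DecompositionMatches Ru.le D Δ) ∧
  (∃ D', IsDecompositionOf Ru' D' g' t' ∧ DecompositionMatches Ru'.le D' Δ') ∧
  ∀ D D', IsDecompositionOf Ru D g t → DecompositionMatches Ru.le D Δ →
    IsDecompositionOf Ru' D' g' t' → DecompositionMatches Ru'.le D' Δ' →
    LSatisfiedBy Ip.le Ip Lm D D'

/-- Partial satisfaction: the constraint is only checked at vertices of the pattern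
decomposition `Δh` whose label is already a construction in `Ru'`. -/
def LPartialSatisfiedBy (leI : Set (L × L)) (Ip Ru' : CSpace V A L)
    (Lm : List ℕ → List ℕ → Option (TConstraint V A L)) (D Δh : DTree V A L) : Prop :=
  ∀ pi pi' s d δh, Lm pi pi' = some s →
    subtreeAt pi D = some d → subtreeAt pi' Δh = some δh →
    IsConstructionIn Ru' δh.rootGraph δh.rootTok →
    ∃ Cset : Set (PreGraph V A L × V),
      (∀ pv ∈ Cset, IsConstruction Ip pv.1 pv.2) ∧
      TCSatisfies leI ⟨d.rootGraph, d.rootTok, δh.rootGraph, δh.rootTok, Cset⟩ s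

/-- The pattern `(ph, vh)` (a construction in the pattern space `Ps'` for `Ru'`) is a partial
`L`-transformation of the construction `(g, t)`. -/
def IsPartialLTransformation (Ru Ru' Ip Ps' : CSpace V A L) (Δ Δ' : DTree V A L)
    (Lm : List ℕ → List ℕ → Option (TConstraint V A L))
    (g : PreGraph V A L) (t : V) (ph : PreGraph V A L) (vh : V) : Prop :=
  (∃ D, IsDecompositionOf Ru D g t ∧ DecompositionMatches Ru.le D Δ) ∧
  (∃ Δh, IsDecompositionOf Ps' Δh ph vh ∧ DecompositionMatches Ru'.le Δh Δ') ∧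
  ∀ D Δh, IsDecompositionOf Ru D g t → DecompositionMatches Ru.le D Δ →
    IsDecompositionOf Ps' Δh ph vh → DecompositionMatches Ru'.le Δh Δ' →
    LPartialSatisfiedBy Ip.le Ip Ru' Lm D Δh

/-! ## Validity, soundness, leaf instantiation -/

/-- Validity of `Lm` for `(g, t)` and `(p, v)` at the pair of vertices `(pi, pi')`. -/
def ValidAt (Ru Ru' Ip Ps' : CSpace V A L) (Δ Δ' : DTree V A L)
    (Lm : List ℕ → List ℕ → Option (TConstraint V A L))
    (g : PreGraph V A L) (t : V) (p : PreGraph V A L) (v : V)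
    (pi pi' : List ℕ) : Prop :=
  ∀ D Δh Dsub Δhsub Δsub Δsub',
    IsDecompositionOf Ru D g t → DecompositionMatches Ru.le D Δ →
    IsDecompositionOf Ps' Δh p v → DecompositionMatches Ru'.le Δh Δ' →
    subtreeAt pi D = some Dsub → subtreeAt pi' Δh = some Δhsub →
    subtreeAt pi Δ = some Δsub → subtreeAt pi' Δ' = some Δsub' →
    IsConstructionIn Ru' Δhsub.ctGraph Δhsub.rootTok →
    IsStructuralLTransformation Ru Ru' Ip Δsub Δsub'
      (fun σ σ' => Lm (pi ++ σ) (pi' ++ σ'))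
      Dsub.ctGraph Dsub.rootTok Δhsub.ctGraph Δhsub.rootTok

/-- Ancestor-validity: validity at every pair of proper descendants-in-the-tree
("ancestors" in the paper's in-tree terminology). -/
def AncestorValidAt (Ru Ru' Ip Ps' : CSpace V A L) (Δ Δ' : DTree V A L)
    (Lm : List ℕ → List ℕ → Option (TConstraint V A L))
    (g : PreGraph V A L) (t : V) (p : PreGraph V A L) (v : V)
    (pi pi' : List ℕ) : Prop :=
  ∀ σ σ' : List ℕ, σ ≠ [] → σ' ≠ [] →
    (∃ d, subtreeAt (pi ++ σ) Δ = some d) → (∃ d', subtreeAt (pi' ++ σ') Δ' = some d') →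
    ValidAt Ru Ru' Ip Ps' Δ Δ' Lm g t p v (pi ++ σ) (pi' ++ σ')

/-- Soundness of a constraint assignment. -/
def SoundAssignment (Ru Ru' Ip Ps' : CSpace V A L) (Δ Δ' : DTree V A L)
    (Lm : List ℕ → List ℕ → Option (TConstraint V A L)) : Prop :=
  ∀ g t, IsConstructionIn Ru g t →
    (∃ D, IsDecompositionOf Ru D g t ∧ DecompositionMatches Ru.le D Δ) →
    ∀ p v, IsConstruction Ps' p v →
      (∃ Δh, IsDecompositionOf Ps' Δh p v ∧ DecompositionMatches Ru'.le Δh Δ') →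
      ∀ pi pi', (∃ d, subtreeAt pi Δ = some d) → (∃ d', subtreeAt pi' Δ' = some d') →
        AncestorValidAt Ru Ru' Ip Ps' Δ Δ' Lm g t p v pi pi' →
        ValidAt Ru Ru' Ip Ps' Δ Δ' Lm g t p v pi pi'

/-- The pattern `(p, v)` leaf-instantiates `Δ'`: it matches `Δ'` and every leaf of its
`Δ'`-canonical decomposition is labelled by a construction in `Ru'`. -/
def LeafInstantiates (Ru' Ps' : CSpace V A L) (Δ' : DTree V A L)
    (p : PreGraph V A L) (v : V) : Prop :=
  (∃ Δh, IsDecompositionOf Ps' Δh p v ∧ DecompositionMatches Ru'.le Δh Δ') ∧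
  ∀ Δh, IsDecompositionOf Ps' Δh p v → DecompositionMatches Ru'.le Δh Δ' →
    ∀ pi δh, subtreeAt pi Δh = some δh → δh.kids = [] →
      IsConstructionIn Ru' δh.rootGraph δh.rootTok

/-- A complete extension of a pattern `(p, v)` that leaf-instantiates `Δ'`. -/
def CompleteExtension (Ru' Ps' : CSpace V A L) (Δ' : DTree V A L)
    (p : PreGraph V A L) (v : V) (g' : PreGraph V A L) (t' : V) : Prop :=
  IsConstructionIn Ru' g' t' ∧
  ∃ fv fa, IsEmbedding Ru'.le g' p fv fa ∧ fv t' = v ∧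
    ∀ Δh, IsDecompositionOf Ps' Δh p v → DecompositionMatches Ru'.le Δh Δ' →
      ∀ pi δh, subtreeAt pi Δh = some δh → δh.kids = [] →
        ∀ x ∈ δh.rootGraph.Tk, x ∈ g'.Tk ∧ fv x = x

/-- `(g, t)` and `(p, v)` are valid at the leaves of `Δ` and `Δ'`. -/
def ValidAtLeaves (Ru Ru' Ip Ps' : CSpace V A L) (Δ Δ' : DTree V A L)
    (Lm : List ℕ → List ℕ → Option (TConstraint V A L))
    (g : PreGraph V A L) (t : V) (p : PreGraph V A L) (v : V) : Prop :=
  ∀ pi pi' δ δ', subtreeAt pi Δ = some δ → subtreeAt pi' Δ' = some δ' →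
    δ.kids = [] → δ'.kids = [] →
    ValidAt Ru Ru' Ip Ps' Δ Δ' Lm g t p v pi pi'



/-! ## Auxiliary machinery for STATEMENT 9 -/

section SplitFoundations

variable {V A L : Type*}

/-! ### List helpers -/

private lemma list_eq_of_getElem?_imp {α : Type*} {l1 l2 : List α}
    (hlen : l1.length = l2.length)
    (h : ∀ (i : ℕ) x, l1[i]? = some x → l2[i]? = some x) : l1 = l2 := by
  apply List.ext_getElem?
  intro i
  cases hx : l1[i]? with
  | none =>
    have h1 : l1.length ≤ i := by simpa using hx
    exact (List.getElem?_eq_none (by omega)).symm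
  | some x => exact (h i x hx).symm

private lemma forall₂_getElem? {α β : Type*} {R : α → β → Prop} :
    ∀ {l : List α} {m : List β}, List.Forall₂ R l m →
      ∀ (i : ℕ) x, l[i]? = some x → ∃ y, m[i]? = some y ∧ R x y := by
  intro l m h
  induction h with
  | nil => intro i x hx; simp at hx
  | @cons a b l m hR _ ih =>
    intro i x hx
    cases i with
    | zero =>
      simp only [List.getElem?_cons_zero, Option.some.injEq] at hx
      exact ⟨b, by simp, hx ▸ hR⟩
    | succ n =>
      simp only [List.getElem?_cons_succ] at hx ⊢
      exact ih n x hx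

private lemma forall₂_append {α β : Type*} {R : α → β → Prop} :
    ∀ {l1 l2 : List α} {m1 m2 : List β}, List.Forall₂ R l1 m1 → List.Forall₂ R l2 m2 →
      List.Forall₂ R (l1 ++ l2) (m1 ++ m2) := by
  intro l1 l2 m1 m2 h1 h2
  induction h1 with
  | nil => simpa using h2
  | cons hR _ ih => exact List.Forall₂.cons hR ih

private lemma forall₂_flatten {α β : Type*} {R : α → β → Prop} :
    ∀ {L : List (List α)} {M : List (List β)}, List.Forall₂ (List.Forall₂ R) L M →
      List.Forall₂ R L.flatten M.flatten := by
  intro L M h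
  induction h with
  | nil => exact List.Forall₂.nil
  | cons h1 _ ih => simpa using forall₂_append h1 ih

private lemma srcSeq_flatten {V A : Type*} (L : List (List (Trail V A))) :
    srcSeq L.flatten = (L.map srcSeq).flatten := by
  simp only [srcSeq, List.map_flatten]; rfl

private lemma srcSeq_map_reform {V A : Type*} (S : List (Trail V A))
    (f : Trail V A → List A) (v : V) :
    srcSeq (S.map (fun e => (⟨f e, e.src, v⟩ : Trail V A))) = srcSeq S := by
  simp only [srcSeq, List.map_map]; rfl

private lemma flatten_map_flatten {α β : Type*} (f : List α → List β) :
    ∀ (M : List (List (List α))),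
      (M.flatten.map f).flatten = (M.map (fun m => (m.map f).flatten)).flatten := by
  intro M
  induction M with
  | nil => simp
  | cons m M ih => simp [List.map_append, List.flatten_append, ← ih, List.flatten_flatten, List.map_flatten]

private lemma map_zipWith_right {α β γ δ : Type*} (φ : α → β → γ) (F : γ → δ) (G : β → δ)
    (h : ∀ a b, F (φ a b) = G b) :
    ∀ (as : List α) (bs : List β), bs.length ≤ as.length →
      List.map F (List.zipWith φ as bs) = List.map G bs := by
  intro as
  induction as with
  | nil => intro bs hb; cases bs with
    | nil => simp
    | cons b bs => simp at hb
  | cons a as ih =>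
    intro bs hb
    cases bs with
    | nil => simp
    | cons b bs => simp [h, ih bs (by simpa using hb)]

private lemma assembleC {α β γ : Type*} (msr : β → γ) (Q : α → β → Prop) :
    ∀ (ars : List α) (Ss : List β), Ss.length = ars.length →
    (∀ (i : ℕ) ai Si, ars[i]? = some ai → Ss[i]? = some Si → ∃ C, Q ai C ∧ msr C = msr Si) →
    ∃ Cl : List β, Cl.length = ars.length ∧
      (∀ (i : ℕ) ai Ci, ars[i]? = some ai → Cl[i]? = some Ci → Q ai Ci) ∧
      Cl.map msr = Ss.map msr := by
  intro ars
  induction ars with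
  | nil =>
    intro Ss hlen _
    cases Ss with
    | nil => exact ⟨[], rfl, by intro i ai Ci h; simp at h, rfl⟩
    | cons S Ss => simp at hlen
  | cons a ars ih =>
    intro Ss hlen H
    cases Ss with
    | nil => simp at hlen
    | cons S Ss =>
      obtain ⟨C0, hQ0, hm0⟩ := H 0 a S (by simp) (by simp)
      obtain ⟨Cl, hClen, hQ, hm⟩ := ih Ss (by simpa using hlen)
        (fun i ai Si h1 h2 => H (i+1) ai Si (by simpa using h1) (by simpa using h2))
      refine ⟨C0 :: Cl, by simp [hClen], ?_, by simp [hm0, hm]⟩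
      intro i ai Ci h1 h2
      cases i with
      | zero =>
        simp only [List.getElem?_cons_zero, Option.some.injEq] at h1 h2
        exact h1 ▸ h2 ▸ hQ0
      | succ n =>
        simp only [List.getElem?_cons_succ] at h1 h2
        exact hQ n ai Ci h1 h2

private lemma assembleB {α V A : Type*} (f' : α → List (Trail V A) → List (Trail V A))
    (P : Trail V A → List (Trail V A) → Prop) :
    ∀ (ars : List α) (Ss' Ss2 : List (List (Trail V A))),
      Ss'.length = ars.length → Ss2.length = ars.length →
      (∀ (i : ℕ) ai S'i S2i, ars[i]? = some ai → Ss'[i]? = some S'i → Ss2[i]? = some S2i →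
        ∃ m, List.Forall₂ P (f' ai S'i) m ∧ srcSeq S2i = (m.map srcSeq).flatten) →
      ∃ M : List (List (List (Trail V A))),
        List.Forall₂ (List.Forall₂ P) (List.zipWith f' ars Ss') M ∧
        Ss2.map srcSeq = M.map (fun m => (m.map srcSeq).flatten) := by
  intro ars
  induction ars with
  | nil =>
    intro Ss' Ss2 h1 h2 _
    cases Ss' with
    | cons _ _ => simp at h1
    | nil =>
      cases Ss2 with
      | cons _ _ => simp at h2
      | nil => exact ⟨[], List.Forall₂.nil, rfl⟩
  | cons a ars ih =>
    intro Ss' Ss2 h1 h2 H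
    cases Ss' with
    | nil => simp at h1
    | cons S' Ss' =>
      cases Ss2 with
      | nil => simp at h2
      | cons S2 Ss2 =>
        obtain ⟨m0, hm0, he0⟩ := H 0 a S' S2 (by simp) (by simp) (by simp)
        obtain ⟨M, hM, hE⟩ := ih Ss' Ss2 (by simpa using h1) (by simpa using h2)
          (fun i ai S'i S2i g1 g2 g3 =>
            H (i+1) ai S'i S2i (by simpa using g1) (by simpa using g2) (by simpa using g3))
        exact ⟨m0 :: M, List.Forall₂.cons hm0 hM, by simp [he0, hE]⟩

/-! ### Graph helpers -/

variable {g h : PreGraph V A L}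

private def OutUniq (g : PreGraph V A L) : Prop :=
  ∀ u ∈ g.Cf, ∀ a ∈ g.Arr, ∀ b ∈ g.Arr, ∀ w w',
    (a, (u, w)) ∈ g.inc → (b, (u, w')) ∈ g.inc → a = b

private lemma inc_arr (hg : IsGraph g) {a : A} {v w : V} (h1 : (a, (v, w)) ∈ g.inc) :
    a ∈ g.Arr := hg.2.1.1 _ h1

private lemma inc_unique (hg : IsGraph g) {a : A} {v w v' w' : V}
    (h1 : (a, (v, w)) ∈ g.inc) (h2 : (a, (v', w')) ∈ g.inc) : v = v' ∧ w = w' := by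
  obtain ⟨y, _, huniq⟩ := hg.2.1.2 a (inc_arr hg h1)
  have e1 := huniq _ h1
  have e2 := huniq _ h2
  constructor
  · exact congrArg Prod.fst (e1.trans e2.symm)
  · exact congrArg Prod.snd (e1.trans e2.symm)

private lemma ia_unique (hg : IsGraph g) {a : A} {i j : ℕ}
    (h1 : (a, i) ∈ g.ia) (h2 : (a, j) ∈ g.ia) : i = j := by
  have ha : a ∈ g.Arr := hg.2.2.2.1.1 _ h1
  obtain ⟨y, _, huniq⟩ := hg.2.2.2.1.2 a ha
  exact (huniq _ h1).trans (huniq _ h2).symm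

private lemma cl_unique (hg : IsGraph g) {u : V} {c c' : L} (hu : u ∈ g.Cf)
    (h1 : (u, c) ∈ g.cl) (h2 : (u, c') ∈ g.cl) : c = c' := by
  obtain ⟨y, _, huniq⟩ := hg.2.2.2.2.2.2 u hu
  exact (huniq _ h1).trans (huniq _ h2).symm

private lemma bip_src (hg : IsGraph g) {a : A} {u x : V}
    (h : (a, (u, x)) ∈ g.inc) (hx : x ∈ g.Tk) : u ∈ g.Cf := by
  rcases hg.2.2.1 a u x h with ⟨_, hx'⟩ | ⟨hu, _⟩
  · exact absurd hx (Set.disjoint_right.mp hg.1 hx')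
  · exact hu

private lemma bip_tk (hg : IsGraph g) {a : A} {s u : V}
    (h : (a, (s, u)) ∈ g.inc) (hu : u ∈ g.Cf) : s ∈ g.Tk := by
  rcases hg.2.2.1 a s u h with ⟨hs, _⟩ | ⟨hs, hu'⟩
  · exact hs
  · exact absurd hu (Set.disjoint_left.mp hg.1 hu')

private lemma ias_unique (hg : IsGraph g) {u : V} {l1 l2 : List A}
    (h1 : InArrowSeq g u l1) (h2 : InArrowSeq g u l2) : l1 = l2 := by
  have key : ∀ {m1 m2 : List A}, InArrowSeq g u m1 → InArrowSeq g u m2 →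
      ∀ (i : ℕ) (a : A), m1[i]? = some a → m2[i]? = some a := by
    intro m1 m2 hh1 hh2 i a hia
    have hmem : a ∈ m1 := List.mem_of_getElem? hia
    have hmem2 : a ∈ m2 := (hh2.2.1 a).2 ((hh1.2.1 a).1 hmem)
    obtain ⟨j, hj⟩ := List.getElem?_of_mem hmem2
    have e1 := hh1.2.2 i a hia
    have e2 := hh2.2.2 j a hj
    have hij : i = j := by
      have := ia_unique hg e1 e2; omega
    rw [hij]; exact hj
  apply List.ext_getElem?
  intro i
  cases hx : l1[i]? with
  | some a => exact (key h1 h2 i a hx).symm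
  | none =>
    cases hy : l2[i]? with
    | none => rfl
    | some b => exact absurd (key h2 h1 i b hy) (by simp [hx])

private lemma ias_nh (hg : IsGraph g) {u : V} {l : List A}
    (h : InArrowSeq (g.Nh u) u l) : InArrowSeq g u l := by
  obtain ⟨hnd, hmem, hia⟩ := h
  refine ⟨hnd, ?_, ?_⟩
  · intro a
    constructor
    · intro ha
      obtain ⟨haArr, w, hw⟩ := (hmem a).1 ha
      exact ⟨haArr.1, w, hw.1⟩
    · intro ⟨haArr, w, hw⟩
      refine (hmem a).2 ⟨⟨haArr, haArr, w, Or.inl hw⟩, w, hw, haArr, w, Or.inl hw⟩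
  · intro i a hi
    exact (hia i a hi).1

private lemma struct_outUniq {Ty : Set L} {le : Set (L × L)} {C : Set L}
    {sg : Set (L × (List L × L))} (hg : IsGraph g)
    (hsg : IsStructureGraph Ty le C sg g) : OutUniq g := by
  intro u hu a haArr b hbArr w w' ha hb
  obtain ⟨c, ins, out, _, _, _, hconf⟩ := hsg.2.2 u hu
  obtain ⟨a0, ha0, huniq⟩ := hconf.2.2.2.2.1
  have hmka : ∀ x ∈ g.Arr, ∀ y, (x, (u, y)) ∈ g.inc →
      x ∈ (g.Nh u).Arr ∧ ∃ z, (x, (u, z)) ∈ (g.Nh u).inc := by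
    intro x hx y hy
    have hxInc : x ∈ g.incidentArrows u := ⟨hx, y, Or.inr hy⟩
    exact ⟨⟨hx, hxInc⟩, y, hy, hxInc⟩
  have e1 := huniq a (hmka a haArr w ha)
  have e2 := huniq b (hmka b hbArr w' hb)
  exact e1.trans e2.symm

private lemma struct_ias_len {Ty : Set L} {le : Set (L × L)} {C : Set L}
    {sg : Set (L × (List L × L))} (hg : IsGraph g)
    (hsg : IsStructureGraph Ty le C sg g) {u : V} {l : List A}
    (hu : u ∈ g.Cf) (h : InArrowSeq g u l) :
    ∃ c ins out, (u, c) ∈ g.cl ∧ c ∈ C ∧ (c, (ins, out)) ∈ sg ∧ l.length = ins.length := by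
  obtain ⟨c, ins, out, hcl, hC, hsig, hconf⟩ := hsg.2.2 u hu
  obtain ⟨ars, hars, hlen, _⟩ := hconf.2.2.2.2.2.2
  have hars' : InArrowSeq g u ars := ias_nh hg hars
  have : l = ars := ias_unique hg h hars'
  exact ⟨c, ins, out, hcl, hC, hsig, this ▸ hlen⟩

private lemma ias_cross {Ty : Set L} {le : Set (L × L)} {C : Set L}
    {sg : Set (L × (List L × L))} {g g' : PreGraph V A L}
    (hg : IsGraph g) (hg' : IsGraph g')
    (hsgg : IsStructureGraph Ty le C sg g) (hsgg' : IsStructureGraph Ty le C sg g')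
    (hsigfun : IsFunctionOn sg C) (hsub : g'.Subgraph g)
    {u : V} {l1 l2 : List A} (hu : u ∈ g'.Cf)
    (h1 : InArrowSeq g' u l1) (h2 : InArrowSeq g u l2) : l1 = l2 := by
  obtain ⟨c, ins, out, hcl, hC, hsig, hlen1⟩ := struct_ias_len hg' hsgg' hu h1
  obtain ⟨c2, ins2, out2, hcl2, hC2, hsig2, hlen2⟩ :=
    struct_ias_len hg hsgg (hsub.2.1 hu) h2
  have hc : c = c2 := cl_unique hg (hsub.2.1 hu) (hsub.2.2.2.2.2.2 hcl) hcl2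
  subst hc
  have hins : ins = ins2 := by
    obtain ⟨y, _, huniq⟩ := hsigfun.2 c hC
    have e1 := huniq _ hsig
    have e2 := huniq _ hsig2
    exact congrArg Prod.fst (e1.trans e2.symm)
  apply list_eq_of_getElem?_imp (by rw [hlen1, hins, ← hlen2])
  intro i a hia
  have hmem : a ∈ l1 := List.mem_of_getElem? hia
  obtain ⟨haArr, w, hw⟩ := (h1.2.1 a).1 hmem
  have hmem2 : a ∈ l2 := (h2.2.1 a).2 ⟨hsub.2.2.1 haArr, w, hsub.2.2.2.1 hw⟩
  obtain ⟨j, hj⟩ := List.getElem?_of_mem hmem2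
  have e1 := h1.2.2 i a hia
  have e2 := h2.2.2 j a hj
  have : i + 1 = j + 1 := ia_unique hg (hsub.2.2.2.2.1 e1) e2
  have hij : i = j := by omega
  rw [hij]; exact hj

/-! ### Chain helpers -/

private lemma chain_arr : ∀ {l : List A} {s t : V}, ChainIn g l s t → ∀ b ∈ l, b ∈ g.Arr := by
  intro l
  induction l with
  | nil => intro s t _ b hb; simp at hb
  | cons a rest ih =>
    intro s t hc b hb
    obtain ⟨haArr, m, hm, hrest⟩ := hc
    rcases List.mem_cons.mp hb with rfl | hb
    · exact haArr
    · exact ih hrest b hb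

private lemma chain_append : ∀ {l1 l2 : List A} {s m t : V},
    ChainIn g l1 s m → ChainIn g l2 m t → ChainIn g (l1 ++ l2) s t := by
  intro l1
  induction l1 with
  | nil => intro l2 s m t h1 h2; cases h1; exact h2
  | cons a rest ih =>
    intro l2 s m t h1 h2
    obtain ⟨haArr, m', hm', hrest⟩ := h1
    exact ⟨haArr, m', hm', ih hrest h2⟩

private lemma chain_mono {g g' : PreGraph V A L} (hsub : g'.Subgraph g) :
    ∀ {l : List A} {s t : V}, ChainIn g' l s t → ChainIn g l s t := by
  intro l
  induction l with
  | nil => intro s t h; exact h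
  | cons a rest ih =>
    intro s t h
    obtain ⟨haArr, m, hm, hrest⟩ := h
    exact ⟨hsub.2.2.1 haArr, m, hsub.2.2.2.1 hm, ih hrest⟩

private lemma chain_after (hg : IsGraph g) : ∀ {l : List A} {s t : V}, ChainIn g l s t →
    ∀ c x y, c ∈ l → (c, (x, y)) ∈ g.inc →
      y = t ∨ ∃ b z, b ∈ l ∧ (b, (y, z)) ∈ g.inc := by
  intro l
  induction l with
  | nil => intro s t _ c x y hc; simp at hc
  | cons a rest ih =>
    intro s t hch c x y hc hcinc
    obtain ⟨haArr, m, hm, hrest⟩ := hch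
    rcases List.mem_cons.mp hc with rfl | hc
    · have hy : y = m := (inc_unique hg hcinc hm).2
      subst hy
      cases rest with
      | nil => exact Or.inl hrest
      | cons b rest' =>
        obtain ⟨hbArr, m2, hm2, _⟩ := hrest
        exact Or.inr ⟨b, m2, List.mem_cons_of_mem _ (List.mem_cons_self), hm2⟩
    · rcases ih hrest c x y hc hcinc with h | ⟨b, z, hb, hbz⟩
      · exact Or.inl h
      · exact Or.inr ⟨b, z, List.mem_cons_of_mem _ hb, hbz⟩

/-! ### Restriction helpers -/

private lemma trGraph_isGraph (hg : IsGraph g) (TR : List (Trail V A)) :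
    IsGraph (trGraph g TR) := by
  obtain ⟨hdis, ⟨hincd, hincu⟩, hbip, ⟨hiad, hiau⟩, ⟨htld, htlu⟩, ⟨hcld, hclu⟩⟩ := hg
  refine ⟨?_, ⟨?_, ?_⟩, ?_, ⟨?_, ?_⟩, ⟨?_, ?_⟩, ⟨?_, ?_⟩⟩
  · exact Set.disjoint_of_subset (Set.inter_subset_left) (Set.inter_subset_left) hdis
  · intro p hp; exact ⟨hincd _ hp.1, hp.2⟩
  · intro x hx
    obtain ⟨y, hy, huniq⟩ := hincu x hx.1
    exact ⟨y, ⟨hy, hx.2⟩, fun y' hy' => huniq y' hy'.1⟩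
  · intro a v w hvw
    obtain ⟨hinc, hmem⟩ := hvw
    rcases hbip a v w hinc with ⟨h1, h2⟩ | ⟨h1, h2⟩
    · exact Or.inl ⟨⟨h1, Or.inl ⟨a, hmem, w, Or.inl hinc⟩⟩,
        ⟨h2, Or.inl ⟨a, hmem, v, Or.inr hinc⟩⟩⟩
    · exact Or.inr ⟨⟨h1, Or.inl ⟨a, hmem, w, Or.inl hinc⟩⟩,
        ⟨h2, Or.inl ⟨a, hmem, v, Or.inr hinc⟩⟩⟩
  · intro p hp; exact ⟨hiad _ hp.1, hp.2⟩
  · intro x hx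
    obtain ⟨y, hy, huniq⟩ := hiau x hx.1
    exact ⟨y, ⟨hy, hx.2⟩, fun y' hy' => huniq y' hy'.1⟩
  · intro p hp; exact ⟨htld _ hp.1, hp.2⟩
  · intro x hx
    obtain ⟨y, hy, huniq⟩ := htlu x hx.1
    exact ⟨y, ⟨hy, hx.2⟩, fun y' hy' => huniq y' hy'.1⟩
  · intro p hp; exact ⟨hcld _ hp.1, hp.2⟩
  · intro x hx
    obtain ⟨y, hy, huniq⟩ := hclu x hx.1
    exact ⟨y, ⟨hy, hx.2⟩, fun y' hy' => huniq y' hy'.1⟩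

private lemma restrict_us (hus : UniStructured g) (Vs : Set V) (As : Set A) :
    UniStructured (g.restrict Vs As) := by
  intro x hx a ha b hb hw hw'
  obtain ⟨w, hwi⟩ := hw
  obtain ⟨w', hwi'⟩ := hw'
  exact hus x hx.1 a ha.1 b hb.1 ⟨w, hwi.1⟩ ⟨w', hwi'.1⟩

/-! ### TES basic lemmas -/

private lemma mem_output {a : A} {src : V} {ars : List A} {Ss : List (List (Trail V A))}
    {i : ℕ} {ai : A} {Si : List (Trail V A)} {e0 : Trail V A}
    (h1 : ars[i]? = some ai) (h2 : Ss[i]? = some Si) (he : e0 ∈ Si) :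
    (⟨e0.arrows ++ [ai, a], e0.src, src⟩ : Trail V A) ∈
      (List.zipWith (fun (ai : A) (Si : List (Trail V A)) =>
        Si.map (fun e => (⟨e.arrows ++ [ai, a], e.src, src⟩ : Trail V A))) ars Ss).flatten := by
  refine List.mem_flatten.mpr ⟨_,
    List.mem_of_getElem? (List.getElem?_zipWith_eq_some.mpr ⟨ai, Si, h1, h2, rfl⟩),
    List.mem_map_of_mem he⟩

private lemma tes_tgt {tr : Trail V A} {S : List (Trail V A)} (h : TES g tr S) :
    ∀ e ∈ S, e.tgt = tr.src := by
  cases h with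
  | nonext _ => intro e he; simp at he; subst he; rfl
  | ext a u ars Ss hext hinc hars hlen hrec =>
    intro e he
    obtain ⟨li, hli, hei⟩ := List.mem_flatten.mp he
    obtain ⟨j, hj⟩ := List.getElem?_of_mem hli
    obtain ⟨aj, Sj, _, _, rfl⟩ := List.getElem?_zipWith_eq_some.mp hj
    obtain ⟨e0, _, rfl⟩ := List.mem_map.mp hei
    rfl

private lemma tes_chain (hg : IsGraph g) {tr : Trail V A} {S : List (Trail V A)}
    (h : TES g tr S) : ∀ e ∈ S, ChainIn g e.arrows e.src tr.src := by
  induction h with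
  | nonext tr hne =>
    intro e he; simp at he; subst he; exact rfl
  | ext tr a u ars Ss hext hinc hars hlen hrec ih =>
    intro e he
    obtain ⟨li, hli, hei⟩ := List.mem_flatten.mp he
    obtain ⟨j, hj⟩ := List.getElem?_of_mem hli
    obtain ⟨aj, Sj, hjar, hjS, rfl⟩ := List.getElem?_zipWith_eq_some.mp hj
    obtain ⟨e0, he0, rfl⟩ := List.mem_map.mp hei
    obtain ⟨ajArr, sj, hsj⟩ := (hars.2.1 aj).1 (List.mem_of_getElem? hjar)
    have hch0 := ih j aj sj Sj hjar hjS hsj e0 he0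
    exact chain_append hch0 ⟨ajArr, u, hsj, hext.1, tr.src, hinc, rfl⟩

private lemma tes_src_tk (hg : IsGraph g) {tr : Trail V A} {S : List (Trail V A)}
    (h : TES g tr S) : tr.src ∈ g.Tk → ∀ e ∈ S, e.src ∈ g.Tk := by
  induction h with
  | nonext tr hne =>
    intro hsrc e he; simp at he; subst he; exact hsrc
  | ext tr a u ars Ss hext hinc hars hlen hrec ih =>
    intro hsrc e he
    obtain ⟨li, hli, hei⟩ := List.mem_flatten.mp he
    obtain ⟨j, hj⟩ := List.getElem?_of_mem hli
    obtain ⟨aj, Sj, hjar, hjS, rfl⟩ := List.getElem?_zipWith_eq_some.mp hj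
    obtain ⟨e0, he0, rfl⟩ := List.mem_map.mp hei
    obtain ⟨ajArr, sj, hsj⟩ := (hars.2.1 aj).1 (List.mem_of_getElem? hjar)
    have hucf : u ∈ g.Cf := bip_src hg hinc hsrc
    exact ih j aj sj Sj hjar hjS hsj (bip_tk hg hsj hucf) e0 he0

private lemma tes_ne (hg : IsGraph g)
    (harsne : ∀ u ∈ g.Cf, ∀ l : List A, InArrowSeq g u l → l ≠ [])
    {tr : Trail V A} {S : List (Trail V A)} (h : TES g tr S) :
    tr.src ∈ g.Tk → S ≠ [] := by
  induction h with
  | nonext tr hne => intro _; simp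
  | ext tr a u ars Ss hext hinc hars hlen hrec ih =>
    intro hsrc hS
    have hucf : u ∈ g.Cf := bip_src hg hinc hsrc
    have harsne' := harsne u hucf ars hars
    have h0 : 0 < ars.length := List.length_pos_iff.mpr harsne'
    obtain ⟨a0, ha0⟩ : ∃ a0, ars[0]? = some a0 := by
      cases h' : ars[0]? with
      | none => exact absurd (List.getElem?_eq_none_iff.mp h') (by omega)
      | some a0 => exact ⟨a0, rfl⟩
    obtain ⟨S0, hS0⟩ : ∃ S0, Ss[0]? = some S0 := by
      cases h' : Ss[0]? with
      | none => exact absurd (List.getElem?_eq_none_iff.mp h') (by omega)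
      | some S0 => exact ⟨S0, rfl⟩
    obtain ⟨a0Arr, s0, hs0⟩ := (hars.2.1 a0).1 (List.mem_of_getElem? ha0)
    have hS0ne := ih 0 a0 s0 S0 ha0 hS0 hs0 (bip_tk hg hs0 hucf)
    obtain ⟨e0, he0⟩ := List.exists_mem_of_ne_nil S0 hS0ne
    have := mem_output (a := a) (src := tr.src) ha0 hS0 he0
    rw [hS] at this
    simp at this

private lemma tes_fresh (hg : IsGraph g) (hout : OutUniq g)
    {tr : Trail V A} {S : List (Trail V A)} (h : TES g tr S) :
    tr.src ∈ g.Tk → tr.tgt ∈ g.Tk → ChainIn g tr.arrows tr.src tr.tgt →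
    ∀ e ∈ S, ∀ b ∈ e.arrows, b ∈ g.Arr ∧ b ∉ tr.arrows := by
  induction h with
  | nonext tr hne =>
    intro _ _ _ e he b hb
    simp at he; subst he; simp at hb
  | ext tr a u ars Ss hext hinc hars hlen hrec ih =>
    intro hsrc htgt hchain e he b hb
    obtain ⟨li, hli, hei⟩ := List.mem_flatten.mp he
    obtain ⟨j, hj⟩ := List.getElem?_of_mem hli
    obtain ⟨aj, Sj, hjar, hjS, rfl⟩ := List.getElem?_zipWith_eq_some.mp hj
    obtain ⟨e0, he0, rfl⟩ := List.mem_map.mp hei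
    obtain ⟨ajArr, sj, hsj⟩ := (hars.2.1 aj).1 (List.mem_of_getElem? hjar)
    have hucf : u ∈ g.Cf := bip_src hg hinc hsrc
    -- aj is not in tr.arrows
    have hajfresh : aj ∉ tr.arrows := by
      intro hmem
      rcases chain_after hg hchain aj sj u hmem hsj with hq | ⟨b', z, hb', hbz⟩
      · subst hq
        exact absurd hucf (Set.disjoint_left.mp hg.1 htgt)
      · have : a = b' := hout u hucf a hext.1 b' (chain_arr hchain b' hb') _ _ hinc hbz
        exact hext.2.1 (this ▸ hb')
    have hchild : ChainIn g (aj :: a :: tr.arrows) sj tr.tgt :=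
      ⟨ajArr, u, hsj, hext.1, tr.src, hinc, hchain⟩
    simp only [Trail.mk.injEq] at hb ⊢
    rcases List.mem_append.mp hb with hb0 | hba
    · have := ih j aj sj Sj hjar hjS hsj (bip_tk hg hsj hucf) htgt hchild e0 he0 b hb0
      refine ⟨this.1, fun hmem => this.2 (by simp [hmem])⟩
    · rcases List.mem_cons.mp hba with rfl | hba
      · exact ⟨ajArr, hajfresh⟩
      · simp at hba
        subst hba
        exact ⟨hext.1, hext.2.1⟩

private lemma tes_det (hg : IsGraph g) (hus : UniStructured g)
    {tr : Trail V A} {S1 : List (Trail V A)} (h1 : TES g tr S1) :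
    tr.src ∈ g.Tk → ∀ S2, TES g tr S2 → S1 = S2 := by
  induction h1 with
  | nonext tr hne =>
    intro hsrc S2 h2
    cases h2 with
    | nonext _ => rfl
    | ext _ a u ars Ss hext hinc hars hlen hrec => exact absurd ⟨a, hext⟩ hne
  | ext tr a u ars Ss hext hinc hars hlen hrec ih =>
    intro hsrc S2 h2
    cases h2 with
    | nonext _ hne => exact absurd ⟨a, hext⟩ hne
    | ext _ a2 u2 ars2 Ss2 hext2 hinc2 hars2 hlen2 hrec2 =>
      obtain ⟨s2, hs2⟩ := hext2.2.2
      have ha : a2 = a := hus tr.src hsrc a2 hext2.1 a hext.1 ⟨s2, hs2⟩ ⟨u, hinc⟩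
      subst ha
      have hu : u2 = u := (inc_unique hg hinc2 hinc).1
      subst hu
      have hars' : ars2 = ars := ias_unique hg hars2 hars
      subst hars'
      have hSs : Ss = Ss2 := by
        apply List.ext_getElem?
        intro i
        by_cases hi : i < ars2.length
        · obtain ⟨ai, hai⟩ : ∃ ai, ars2[i]? = some ai := by
            cases h' : ars2[i]? with
            | none => exact absurd (List.getElem?_eq_none_iff.mp h') (by omega)
            | some ai => exact ⟨ai, rfl⟩
          obtain ⟨Si, hSi⟩ : ∃ Si, Ss[i]? = some Si := by
            cases h' : Ss[i]? with
            | none => exact absurd (List.getElem?_eq_none_iff.mp h') (by omega)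
            | some Si => exact ⟨Si, rfl⟩
          obtain ⟨S2i, hS2i⟩ : ∃ S2i, Ss2[i]? = some S2i := by
            cases h' : Ss2[i]? with
            | none => exact absurd (List.getElem?_eq_none_iff.mp h') (by omega)
            | some S2i => exact ⟨S2i, rfl⟩
          obtain ⟨aiArr, si, hsi⟩ := (hars.2.1 ai).1 (List.mem_of_getElem? hai)
          have hucf : u2 ∈ g.Cf := bip_src hg hinc hsrc
          have := ih i ai si Si hai hSi hsi (bip_tk hg hsi hucf) S2i
            (hrec2 i ai si S2i hai hS2i hsi)
          rw [hSi, hS2i, this]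
        · rw [List.getElem?_eq_none (by omega), List.getElem?_eq_none (by omega)]
      rw [hSs]

/-! ### The generator decomposition lemma -/

private lemma tes_gen {g g' : PreGraph V A L} (hg : IsGraph g) (hg' : IsGraph g')
    (hus : UniStructured g) (hsub : g'.Subgraph g)
    (hcross : ∀ u ∈ g'.Cf, ∀ l1 l2 : List A,
      InArrowSeq g' u l1 → InArrowSeq g u l2 → l1 = l2)
    {tr : Trail V A} {trs : List (Trail V A)} (h : TES g' tr trs) :
    tr.src ∈ g'.Tk → ∀ S, TES g tr S →
    ∃ Sis : List (List (Trail V A)),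
      List.Forall₂ (fun tri Si =>
        TES g ⟨tri.arrows ++ tr.arrows, tri.src, tr.tgt⟩ Si) trs Sis ∧
      srcSeq S = (Sis.map srcSeq).flatten := by
  induction h with
  | nonext tr hne =>
    intro hsrc S hS
    refine ⟨[S], List.Forall₂.cons (show TES g ⟨[] ++ tr.arrows, tr.src, tr.tgt⟩ S from hS)
      List.Forall₂.nil, by simp⟩
  | ext tr a u ars Ss' hext hinc hars hlen hrec ih =>
    intro hsrc S hS
    have hextg : ExtendableBy g tr a := by
      obtain ⟨s, hs⟩ := hext.2.2
      exact ⟨hsub.2.2.1 hext.1, hext.2.1, s, hsub.2.2.2.1 hs⟩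
    cases hS with
    | nonext _ hne => exact absurd ⟨a, hextg⟩ hne
    | ext _ a2 u2 ars2 Ss2 hext2 hinc2 hars2 hlen2 hrec2 =>
      have hsrcg : tr.src ∈ g.Tk := hsub.1 hsrc
      obtain ⟨s2, hs2⟩ := hext2.2.2
      have ha : a2 = a := hus tr.src hsrcg a2 hext2.1 a hextg.1 ⟨s2, hs2⟩
        ⟨u, hsub.2.2.2.1 hinc⟩
      subst ha
      have hu : u2 = u := (inc_unique hg hinc2 (hsub.2.2.2.1 hinc)).1
      subst hu
      have hucf' : u2 ∈ g'.Cf := bip_src hg' hinc hsrc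
      have harseq : ars = ars2 := hcross u2 hucf' ars ars2 hars hars2
      subst harseq
      -- pointwise application of the inductive hypothesis
      have H : ∀ (i : ℕ) ai S'i S2i, ars[i]? = some ai → Ss'[i]? = some S'i →
          Ss2[i]? = some S2i →
          ∃ m, List.Forall₂ (fun tri Si =>
              TES g ⟨tri.arrows ++ tr.arrows, tri.src, tr.tgt⟩ Si)
            (S'i.map (fun e => (⟨e.arrows ++ [ai, a2], e.src, tr.src⟩ : Trail V A))) m ∧
            srcSeq S2i = (m.map srcSeq).flatten := by
        intro i ai S'i S2i h1 h2 h3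
        obtain ⟨aiArr, si, hsi⟩ := (hars.2.1 ai).1 (List.mem_of_getElem? h1)
        have hchild : TES g ⟨ai :: a2 :: tr.arrows, si, tr.tgt⟩ S2i :=
          hrec2 i ai si S2i h1 h3 (hsub.2.2.2.1 hsi)
        obtain ⟨m, hm, hmsrc⟩ := ih i ai si S'i h1 h2 hsi (bip_tk hg' hsi hucf') S2i hchild
        refine ⟨m, ?_, hmsrc⟩
        rw [List.forall₂_map_left_iff]
        refine hm.imp ?_
        intro e Si hTES
        rw [List.append_assoc]
        exact hTES
      obtain ⟨M, hM, hE⟩ := assembleB _ _ ars Ss' Ss2 hlen hlen2 H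
      refine ⟨M.flatten, forall₂_flatten hM, ?_⟩
      rw [srcSeq_flatten]
      have e2 : List.map srcSeq (List.zipWith (fun (ai : A) (Si : List (Trail V A)) =>
          Si.map (fun e => (⟨e.arrows ++ [ai, a2], e.src, tr.src⟩ : Trail V A))) ars Ss2)
          = List.map srcSeq Ss2 := by
        apply map_zipWith_right _ _ _ (fun ai Si => srcSeq_map_reform Si _ _) ars Ss2
        omega
      rw [e2, hE, flatten_map_flatten]

/-! ### The induced-construction mirror lemma -/

private lemma tes_mirror (hg : IsGraph g) (hus : UniStructured g)
    (hout : OutUniq g) (harsne : ∀ u ∈ g.Cf, ∀ l : List A, InArrowSeq g u l → l ≠ [])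
    (hArrSub : h.Arr ⊆ g.Arr)
    (hinc_iff : ∀ q : A × (V × V), q ∈ h.inc ↔ q ∈ g.inc ∧ q.1 ∈ h.Arr)
    (hia_iff : ∀ q : A × ℕ, q ∈ h.ia ↔ q ∈ g.ia ∧ q.1 ∈ h.Arr)
    {tr : Trail V A} {S : List (Trail V A)} (hT : TES g tr S) :
    ∀ (p : List A) (w0 : V),
      tr.src ∈ g.Tk → tr.tgt ∈ g.Tk → ChainIn g tr.arrows tr.src tr.tgt →
      (∀ e ∈ S, ∀ b ∈ e.arrows, b ∈ h.Arr) →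
      (∀ b ∈ tr.arrows, b ∉ p → b ∉ h.Arr) →
      (∀ b ∈ p, b ∈ tr.arrows) →
      ∃ C, TES h ⟨p, tr.src, w0⟩ C ∧ srcSeq C = srcSeq S := by
  induction hT with
  | nonext tr hne =>
    intro p w0 hsrc htgt hchain hdown hblock hpsub
    refine ⟨[⟨[], tr.src, tr.src⟩], ?_, rfl⟩
    have hne' : NonExtendable h ⟨p, tr.src, w0⟩ := by
      rintro ⟨b, hbArr, hbp, s, hbinc⟩
      have hbincg := (hinc_iff _).mp hbinc
      have hbtr : b ∉ tr.arrows := fun hmem => hblock b hmem hbp hbArr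
      exact hne ⟨b, hArrSub hbArr, hbtr, s, hbincg.1⟩
    exact TES.nonext (g := h) ⟨p, tr.src, w0⟩ hne'
  | ext tr a u ars Ss hext hinc hars hlen hrec ih =>
    intro p w0 hsrc htgt hchain hdown hblock hpsub
    have hucf : u ∈ g.Cf := bip_src hg hinc hsrc
    have haiArr : ∀ (i : ℕ) (ai : A), ars[i]? = some ai → ai ∈ h.Arr := by
      intro i ai hai
      have hilt : i < ars.length := by
        by_contra hc
        rw [List.getElem?_eq_none (by omega)] at hai
        simp at hai
      obtain ⟨Si, hSi⟩ : ∃ Si, Ss[i]? = some Si := by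
        cases h' : Ss[i]? with
        | none => exact absurd (List.getElem?_eq_none_iff.mp h') (by omega)
        | some Si => exact ⟨Si, rfl⟩
      obtain ⟨aiA, si, hsi⟩ := (hars.2.1 ai).1 (List.mem_of_getElem? hai)
      have hchild := hrec i ai si Si hai hSi hsi
      have hSine := tes_ne hg harsne hchild (bip_tk hg hsi hucf)
      obtain ⟨e0, he0⟩ := List.exists_mem_of_ne_nil Si hSine
      exact hdown _ (mem_output hai hSi he0) ai (by simp)
    have haArr : a ∈ h.Arr := by
      have harsne' := harsne u hucf ars hars
      have h0 : 0 < ars.length := List.length_pos_iff.mpr harsne'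
      obtain ⟨a0, ha0⟩ : ∃ a0, ars[0]? = some a0 := by
        cases h' : ars[0]? with
        | none => exact absurd (List.getElem?_eq_none_iff.mp h') (by omega)
        | some a0 => exact ⟨a0, rfl⟩
      obtain ⟨S0, hS0⟩ : ∃ S0, Ss[0]? = some S0 := by
        cases h' : Ss[0]? with
        | none => exact absurd (List.getElem?_eq_none_iff.mp h') (by omega)
        | some S0 => exact ⟨S0, rfl⟩
      obtain ⟨a0A, s0, hs0⟩ := (hars.2.1 a0).1 (List.mem_of_getElem? ha0)
      have hchild := hrec 0 a0 s0 S0 ha0 hS0 hs0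
      have hS0ne := tes_ne hg harsne hchild (bip_tk hg hs0 hucf)
      obtain ⟨e0, he0⟩ := List.exists_mem_of_ne_nil S0 hS0ne
      exact hdown _ (mem_output ha0 hS0 he0) a (by simp)
    have hextH : ExtendableBy h ⟨p, tr.src, w0⟩ a :=
      ⟨haArr, fun hp => hext.2.1 (hpsub a hp), u, (hinc_iff _).mpr ⟨hinc, haArr⟩⟩
    have harsH : InArrowSeq h u ars := by
      refine ⟨hars.1, ?_, ?_⟩
      · intro b
        constructor
        · intro hb
          obtain ⟨j, hj⟩ := List.getElem?_of_mem hb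
          obtain ⟨bA, w, hw⟩ := (hars.2.1 b).1 hb
          exact ⟨haiArr j b hj, w, (hinc_iff _).mpr ⟨hw, haiArr j b hj⟩⟩
        · rintro ⟨hbh, w, hw⟩
          exact (hars.2.1 b).2 ⟨hArrSub hbh, w, ((hinc_iff _).mp hw).1⟩
      · intro i b hib
        exact (hia_iff _).mpr ⟨hars.2.2 i b hib, haiArr i b hib⟩
    have H : ∀ (i : ℕ) (ai : A) (Si : List (Trail V A)),
        ars[i]? = some ai → Ss[i]? = some Si →
        ∃ C, (∀ si, (ai, (si, u)) ∈ g.inc → TES h ⟨ai :: a :: p, si, w0⟩ C) ∧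
          srcSeq C = srcSeq Si := by
      intro i ai Si hai hSi
      obtain ⟨aiA, si, hsi⟩ := (hars.2.1 ai).1 (List.mem_of_getElem? hai)
      have hchain' : ChainIn g (ai :: a :: tr.arrows) si tr.tgt :=
        ⟨aiA, u, hsi, hext.1, tr.src, hinc, hchain⟩
      obtain ⟨C, hC, hCsrc⟩ := ih i ai si Si hai hSi hsi (ai :: a :: p) w0
        (bip_tk hg hsi hucf) htgt hchain'
        (fun e0 he0 b hb => hdown _ (mem_output hai hSi he0) b (by simp [hb]))
        (fun b hb hbp => by
          simp only [List.mem_cons] at hb hbp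
          push_neg at hbp
          rcases hb with rfl | rfl | hb
          · exact absurd rfl hbp.1
          · exact absurd rfl hbp.2.1
          · exact hblock b hb hbp.2.2)
        (fun b hb => by
          simp only [List.mem_cons] at hb ⊢
          rcases hb with rfl | rfl | hb
          · exact Or.inl rfl
          · exact Or.inr (Or.inl rfl)
          · exact Or.inr (Or.inr (hpsub b hb)))
      refine ⟨C, ?_, hCsrc⟩
      intro si' hsi'
      have hss : si' = si := (inc_unique hg hsi' hsi).1
      rw [hss]; exact hC
    obtain ⟨Cl, hClen, hQ, hmap⟩ := assembleC srcSeq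
      (fun ai C => ∀ si, (ai, (si, u)) ∈ g.inc → TES h ⟨ai :: a :: p, si, w0⟩ C)
      ars Ss hlen H
    refine ⟨_, TES.ext (g := h) ⟨p, tr.src, w0⟩ a u ars Cl hextH
      ((hinc_iff _).mpr ⟨hinc, haArr⟩) harsH hClen ?_, ?_⟩
    · intro i ai si Ci hai hCi hsiH
      exact hQ i ai Ci hai hCi si ((hinc_iff _).mp hsiH).1
    · rw [srcSeq_flatten, srcSeq_flatten]
      have eC := map_zipWith_right
        (fun (ai : A) (Si : List (Trail V A)) =>
          Si.map (fun e => (⟨e.arrows ++ [ai, a], e.src, tr.src⟩ : Trail V A)))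
        srcSeq srcSeq (fun ai Si => srcSeq_map_reform Si _ _) ars Cl (by omega)
      have eS := map_zipWith_right
        (fun (ai : A) (Si : List (Trail V A)) =>
          Si.map (fun e => (⟨e.arrows ++ [ai, a], e.src, tr.src⟩ : Trail V A)))
        srcSeq srcSeq (fun ai Si => srcSeq_map_reform Si _ _) ars Ss (by omega)
      rw [eC, eS, hmap]

private lemma tes_src_vertex (hg : IsGraph g)
    (harsne : ∀ u ∈ g.Cf, ∀ l : List A, InArrowSeq g u l → l ≠ [])
    {tr : Trail V A} {S : List (Trail V A)} (hT : TES g tr S) (hsrc : tr.src ∈ g.Tk) :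
    tr.src ∈ trailVertexSet g S := by
  cases hT with
  | nonext _ hne =>
    exact Or.inr ⟨⟨[], tr.src, tr.src⟩, by simp, rfl, rfl⟩
  | ext _ a u ars Ss hext hinc hars hlen hrec =>
    have hucf : u ∈ g.Cf := bip_src hg hinc hsrc
    have harsne' := harsne u hucf ars hars
    have h0 : 0 < ars.length := List.length_pos_iff.mpr harsne'
    obtain ⟨a0, ha0⟩ : ∃ a0, ars[0]? = some a0 := by
      cases h' : ars[0]? with
      | none => exact absurd (List.getElem?_eq_none_iff.mp h') (by omega)
      | some a0 => exact ⟨a0, rfl⟩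
    obtain ⟨S0, hS0⟩ : ∃ S0, Ss[0]? = some S0 := by
      cases h' : Ss[0]? with
      | none => exact absurd (List.getElem?_eq_none_iff.mp h') (by omega)
      | some S0 => exact ⟨S0, rfl⟩
    obtain ⟨a0A, s0, hs0⟩ := (hars.2.1 a0).1 (List.mem_of_getElem? ha0)
    have hchild := hrec 0 a0 s0 S0 ha0 hS0 hs0
    have hS0ne := tes_ne hg harsne hchild (bip_tk hg hs0 hucf)
    obtain ⟨e0, he0⟩ := List.exists_mem_of_ne_nil S0 hS0ne
    exact Or.inl ⟨a, ⟨_, mem_output ha0 hS0 he0, by simp⟩, u, Or.inr hinc⟩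

end SplitFoundations

/-- a split of a construction determines its foundation token-sequence:
`Ft(g, t) = Ft(ic(tr1)) ⊕ ⋯ ⊕ Ft(ic(trn))`. -/
theorem split_preserves_foundations {V A L : Type*}
    (Cs : CSpace V A L) (hCs : IsCSpace Cs)
    (g : PreGraph V A L) (t : V) (hc : IsConstruction Cs g t)
    (g' : PreGraph V A L) (hc' : IsConstruction Cs g' t) (hsub : g'.Subgraph g)
    (trs : List (Trail V A)) (hgen : TES g' (Trail.nil t) trs)
    (Ss Cis : List (List (Trail V A)))
    (hSlen : Ss.length = trs.length) (hClen : Cis.length = trs.length)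
    (hTES : ∀ (i : ℕ) (tri : Trail V A) (Si : List (Trail V A)),
        trs[i]? = some tri → Ss[i]? = some Si → TES g tri Si)
    (hCTSic : ∀ (i : ℕ) (tri : Trail V A) (Si Ci : List (Trail V A)),
        trs[i]? = some tri → Ss[i]? = some Si → Cis[i]? = some Ci →
        TES (trGraph g Si) (Trail.nil tri.src) Ci)
    (S : List (Trail V A)) (hCTS : TES g (Trail.nil t) S) :
    srcSeq S = (Cis.map srcSeq).flatten := by
  classical
  obtain ⟨hgsub, hsgg, _, _, _, husg, htTk, _⟩ := hc
  obtain ⟨hg'sub, hsgg', _, _, _, husg', htTk', _⟩ := hc'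
  have hgG : IsGraph g := hsgg.1
  have hgG' : IsGraph g' := hsgg'.1
  have hsigfun : IsFunctionOn Cs.sig Cs.C := hCs.2.2.1
  have hinsne := hCs.2.2.2.1
  have harsne : ∀ u ∈ g.Cf, ∀ l : List A, InArrowSeq g u l → l ≠ [] := by
    intro u hu l hl hlnil
    obtain ⟨c, ins, out, _, _, hsig, hlen⟩ := struct_ias_len hgG hsgg hu hl
    have hne := (hinsne c ins out hsig).1
    rw [hlnil] at hlen
    exact hne (List.length_eq_zero_iff.mp hlen.symm)
  have hout : OutUniq g := struct_outUniq hgG hsgg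
  have hcross : ∀ u ∈ g'.Cf, ∀ l1 l2 : List A,
      InArrowSeq g' u l1 → InArrowSeq g u l2 → l1 = l2 :=
    fun u hu l1 l2 h1 h2 => ias_cross hgG hgG' hsgg hsgg' hsigfun hsub hu h1 h2
  -- Step 1: decompose the CTS of (g,t) along the generator
  obtain ⟨Sis, hF, hEq⟩ := tes_gen hgG hgG' husg hsub hcross hgen htTk' S hCTS
  have hSisLen : trs.length = Sis.length := hF.length_eq
  -- facts about the trails tri
  have htriTgt : ∀ tri ∈ trs, tri.tgt = t := fun tri htri => tes_tgt hgen tri htri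
  have htriSrc : ∀ tri ∈ trs, tri.src ∈ g.Tk :=
    fun tri htri => hsub.1 (tes_src_tk hgG' hgen htTk' tri htri)
  -- Step 2: identify Sis with the given Ss
  have hSis : Sis = Ss := by
    apply list_eq_of_getElem?_imp (by omega)
    intro i Si' hSi'
    have hi : i < Sis.length := by
      by_contra hcon
      rw [List.getElem?_eq_none (by omega)] at hSi'
      simp at hSi'
    obtain ⟨tri, htri⟩ : ∃ tri, trs[i]? = some tri := by
      cases h' : trs[i]? with
      | none => exact absurd (List.getElem?_eq_none_iff.mp h') (by omega)
      | some tri => exact ⟨tri, rfl⟩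
    obtain ⟨Si, hSi⟩ : ∃ Si, Ss[i]? = some Si := by
      cases h' : Ss[i]? with
      | none => exact absurd (List.getElem?_eq_none_iff.mp h') (by omega)
      | some Si => exact ⟨Si, rfl⟩
    obtain ⟨y, hy, hR⟩ := forall₂_getElem? hF i tri htri
    have hyS : y = Si' := by rw [hy] at hSi'; exact Option.some.inj hSi'
    rw [hyS] at hR
    have hR' : TES g tri Si' := by
      have htgt : tri.tgt = t := htriTgt tri (List.mem_of_getElem? htri)
      obtain ⟨ar, sr, tg⟩ := tri
      simp only at htgt
      have har : ar ++ (Trail.nil (V := V) (A := A) t).arrows = ar := List.append_nil ar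
      rw [har] at hR
      rw [htgt]
      exact hR
    have hdet := tes_det hgG husg hR' (htriSrc tri (List.mem_of_getElem? htri)) Si
      (hTES i tri Si htri hSi)
    rw [hSi, ← hdet]
  rw [hSis] at hEq
  rw [hEq]
  -- Step 3: pointwise, srcSeq Si = srcSeq Ci via the mirror lemma
  have hmapeq : Ss.map srcSeq = Cis.map srcSeq := by
    apply list_eq_of_getElem?_imp (by simp [hSlen, hClen])
    intro i x hx
    rw [List.getElem?_map] at hx ⊢
    cases hSi : Ss[i]? with
    | none => rw [hSi] at hx; simp at hx
    | some Si =>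
      rw [hSi] at hx
      simp only [Option.map_some] at hx
      have hi : i < Ss.length := by
        by_contra hcon
        rw [List.getElem?_eq_none (by omega)] at hSi
        simp at hSi
      obtain ⟨tri, htri⟩ : ∃ tri, trs[i]? = some tri := by
        cases h' : trs[i]? with
        | none => exact absurd (List.getElem?_eq_none_iff.mp h') (by omega)
        | some tri => exact ⟨tri, rfl⟩
      obtain ⟨Ci, hCi⟩ : ∃ Ci, Cis[i]? = some Ci := by
        cases h' : Cis[i]? with
        | none => exact absurd (List.getElem?_eq_none_iff.mp h') (by omega)
        | some Ci => exact ⟨Ci, rfl⟩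
      have htrimem : tri ∈ trs := List.mem_of_getElem? htri
      have hTi : TES g tri Si := hTES i tri Si htri hSi
      have hCTi : TES (trGraph g Si) (Trail.nil tri.src) Ci := hCTSic i tri Si Ci htri hSi hCi
      have hsrcTk : tri.src ∈ g.Tk := htriSrc tri htrimem
      have htgtt : tri.tgt = t := htriTgt tri htrimem
      have htgtTk : tri.tgt ∈ g.Tk := htgtt ▸ htTk
      have hchain : ChainIn g tri.arrows tri.src tri.tgt := by
        have hch := tes_chain hgG' hgen tri htrimem
        rw [htgtt]
        exact chain_mono hsub hch
      have hfresh := tes_fresh hgG hout hTi hsrcTk htgtTk hchain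
      have hArrSub : (trGraph g Si).Arr ⊆ g.Arr := fun b hb => hb.1
      have hincify : ∀ q : A × (V × V),
          q ∈ (trGraph g Si).inc ↔ q ∈ g.inc ∧ q.1 ∈ (trGraph g Si).Arr := by
        intro q
        constructor
        · rintro ⟨hq, hmem⟩
          exact ⟨hq, hgG.2.1.1 _ hq, hmem⟩
        · rintro ⟨hq, _, hmem⟩
          exact ⟨hq, hmem⟩
      have hiaify : ∀ q : A × ℕ,
          q ∈ (trGraph g Si).ia ↔ q ∈ g.ia ∧ q.1 ∈ (trGraph g Si).Arr := by
        intro q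
        constructor
        · rintro ⟨hq, hmem⟩
          exact ⟨hq, hgG.2.2.2.1.1 _ hq, hmem⟩
        · rintro ⟨hq, _, hmem⟩
          exact ⟨hq, hmem⟩
      obtain ⟨C, hC, hCeq⟩ := tes_mirror hgG husg hout harsne hArrSub hincify hiaify hTi
        [] tri.src hsrcTk htgtTk hchain
        (fun e he b hb => ⟨(hfresh e he b hb).1, e, he, hb⟩)
        (fun b hb _ hbh => (hfresh hbh.2.choose hbh.2.choose_spec.1 b
          hbh.2.choose_spec.2).2 hb)
        (fun b hb => absurd hb List.not_mem_nil)
      have hgrG : IsGraph (trGraph g Si) := trGraph_isGraph hgG Si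
      have hgrUs : UniStructured (trGraph g Si) := restrict_us husg _ _
      have hsrcH : tri.src ∈ (trGraph g Si).Tk :=
        ⟨hsrcTk, tes_src_vertex hgG harsne hTi hsrcTk⟩
      have hdet : C = Ci := tes_det hgrG hgrUs hC hsrcH Ci hCTi
      rw [hCi]
      simp only [Option.map_some]
      rw [← hx, ← hdet, hCeq]
  rw [hmapeq]


end RST
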